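/- arXiv:2203.14605 — 2 statements merged into one kernel-verified Lean document; each statement's English description precedes it below -/
import Mathlib

section
/- For polynomials p, q in n real variables, define [p,q]_∂ := (p(∂)q)(0), where p(∂) is obtained from p by substituting ∂/∂x_i for x_i. Then [p,q]_∂ = (2π)^{-n/2} ∫_{ℝ^n} (e^{-Δ/2}p)(x)·(e^{-Δ/2}q)(x)·e^{-x²/2} dx, where Δ is the Laplacian, x² = x_1²+⋯+x_n², and e^{-Δ/2} acts on polynomials via its (terminating) power series. -/
open MvPolynomial Finset

/-- `p(∂) q`: the result of substituting `∂/∂x_i` for `x_i` in `p` and applying the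
resulting constant-coefficient differential operator to `q`. -/
noncomputable def diffOpApply {n : ℕ} (p q : MvPolynomial (Fin n) ℝ) :
    MvPolynomial (Fin n) ℝ :=
  ∑ d ∈ p.support, p.coeff d •
    ((List.ofFn fun i =>
        ((pderiv i).toLinearMap : Module.End ℝ (MvPolynomial (Fin n) ℝ)) ^ (d i)).prod q)

/-- The Laplacian `Δ = ∑ ∂²/∂x_i²` on polynomials. -/
noncomputable def polyLaplacian (n : ℕ) : Module.End ℝ (MvPolynomial (Fin n) ℝ) :=
  ∑ i : Fin n, ((pderiv i).toLinearMap : Module.End ℝ (MvPolynomial (Fin n) ℝ)) ^ 2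

/-- `e^{-Δ/2} p`, defined via the (terminating) power series. -/
noncomputable def expNegHalfLap {n : ℕ} (p : MvPolynomial (Fin n) ℝ) :
    MvPolynomial (Fin n) ℝ :=
  ∑ k ∈ Finset.range (p.totalDegree + 1),
    ((-(1 : ℝ) / 2) ^ k / (Nat.factorial k : ℝ)) • ((polyLaplacian n ^ k) p)

namespace Macd

variable {n : ℕ}

noncomputable abbrev P (i : Fin n) : Module.End ℝ (MvPolynomial (Fin n) ℝ) :=
  (pderiv i).toLinearMap

lemma pderiv_comm' (i j : Fin n) (f : MvPolynomial (Fin n) ℝ) :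
    pderiv i (pderiv j f) = pderiv j (pderiv i f) := by
  induction f using MvPolynomial.induction_on' with
  | add p q hp hq => simp [hp, hq]
  | monomial s a =>
    rcases eq_or_ne i j with rfl | hij
    · rfl
    · simp only [pderiv_monomial]
      rw [Finsupp.tsub_apply, Finsupp.tsub_apply, Finsupp.single_apply, Finsupp.single_apply,
        if_neg hij, if_neg (Ne.symm hij)]
      rw [tsub_tsub, tsub_tsub, add_comm]
      congr 1
      push_cast [Nat.sub_zero]
      ring

lemma commute_P (i j : Fin n) : Commute (P (n := n) i) (P j) := by
  apply LinearMap.ext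
  intro f
  simp only [Module.End.mul_apply]
  exact pderiv_comm' i j f

/-- generic list lemma: product of pointwise products -/
lemma ofFn_prod_mul {M : Type*} [Monoid M] :
    ∀ {m : ℕ} (g h : Fin m → M),
      (∀ j k, j ≠ k → Commute (h j) (g k)) →
      (List.ofFn fun j => g j * h j).prod = (List.ofFn g).prod * (List.ofFn h).prod := by
  intro m
  induction m with
  | zero => intro g h _; simp
  | succ m ih =>
    intro g h hc
    rw [List.ofFn_succ, List.ofFn_succ, List.ofFn_succ, List.prod_cons, List.prod_cons,
      List.prod_cons]
    rw [ih (fun j => g j.succ) (fun j => h j.succ)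
      (fun j k hjk => hc j.succ k.succ (by simpa using hjk))]
    have hcomm : Commute (h 0) (List.ofFn fun j => g (Fin.succ j)).prod := by
      apply Commute.list_prod_right
      intro x hx
      rw [List.mem_ofFn] at hx
      obtain ⟨k, rfl⟩ := hx
      exact hc 0 k.succ (Fin.succ_ne_zero k).symm
    calc g 0 * h 0 * ((List.ofFn fun j => g j.succ).prod * (List.ofFn fun j => h j.succ).prod)
        = g 0 * (h 0 * (List.ofFn fun j => g j.succ).prod) * (List.ofFn fun j => h j.succ).prod := by
          rw [mul_assoc, mul_assoc, mul_assoc]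
      _ = g 0 * ((List.ofFn fun j => g j.succ).prod * h 0) * (List.ofFn fun j => h j.succ).prod := by
          rw [hcomm.eq]
      _ = g 0 * (List.ofFn fun j => g j.succ).prod * (h 0 * (List.ofFn fun j => h j.succ).prod) := by
          rw [mul_assoc, mul_assoc, mul_assoc]

lemma ofFn_single_prod {M : Type*} [Monoid M] :
    ∀ {m : ℕ} (i : Fin m) (a : M),
      (List.ofFn fun j => if j = i then a else 1).prod = a := by
  intro m
  induction m with
  | zero => exact fun i => i.elim0
  | succ m ih =>
    intro i a
    rw [List.ofFn_succ, List.prod_cons]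
    rcases Fin.eq_zero_or_eq_succ i with rfl | ⟨i', rfl⟩
    · have : (List.ofFn fun j : Fin m => if j.succ = (0 : Fin (m+1)) then a else 1).prod = 1 := by
        apply List.prod_eq_one
        intro x hx
        rw [List.mem_ofFn] at hx
        obtain ⟨k, rfl⟩ := hx
        simp [Fin.succ_ne_zero]
      simp [this]
    · rw [if_neg (Fin.succ_ne_zero i').symm, one_mul]
      have : (fun j : Fin m => if j.succ = i'.succ then a else 1)
          = fun j : Fin m => if j = i' then a else 1 := by
        funext j
        simp [Fin.succ_inj]
      rw [this, ih]

/-- `∂^d` as an endomorphism -/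
noncomputable def Dpow (d : Fin n →₀ ℕ) : Module.End ℝ (MvPolynomial (Fin n) ℝ) :=
  (List.ofFn fun i => P i ^ (d i)).prod

lemma Dpow_zero : Dpow (0 : Fin n →₀ ℕ) = 1 := by
  unfold Dpow
  apply List.prod_eq_one
  intro x hx
  rw [List.mem_ofFn] at hx
  obtain ⟨k, rfl⟩ := hx
  simp

lemma Dpow_add_single (d : Fin n →₀ ℕ) (i : Fin n) :
    Dpow (d + Finsupp.single i 1) = Dpow d * P i := by
  unfold Dpow
  have h1 : (fun j => P j ^ (((d + Finsupp.single i 1) : Fin n →₀ ℕ) j))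
      = fun j => (P j ^ d j) * (if j = i then P i else 1) := by
    funext j
    rw [Finsupp.add_apply, pow_add, Finsupp.single_apply]
    rcases eq_or_ne i j with rfl | hij
    · rw [if_pos rfl, if_pos rfl, pow_one]
    · rw [if_neg hij, if_neg (Ne.symm hij), pow_zero]
  rw [h1, ofFn_prod_mul _ _ ?hc, ofFn_single_prod]
  case hc =>
    intro j k _
    rcases eq_or_ne j i with rfl | hji
    · rw [if_pos rfl]; exact (commute_P j k).pow_right _
    · rw [if_neg hji]; exact Commute.one_left _

lemma diffOpApply_eq (p q : MvPolynomial (Fin n) ℝ) :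
    diffOpApply p q = ∑ d ∈ p.support, p.coeff d • Dpow d q := rfl

lemma diffOpApply_eq_sum_subset {p : MvPolynomial (Fin n) ℝ} (q : MvPolynomial (Fin n) ℝ)
    {S : Finset (Fin n →₀ ℕ)} (hS : p.support ⊆ S) :
    diffOpApply p q = ∑ d ∈ S, p.coeff d • Dpow d q := by
  rw [diffOpApply_eq]
  exact Finset.sum_subset hS (fun d _ hd => by
    rw [MvPolynomial.notMem_support_iff.mp hd, zero_smul])

lemma diffOpApply_add_left (p₁ p₂ q : MvPolynomial (Fin n) ℝ) :
    diffOpApply (p₁ + p₂) q = diffOpApply p₁ q + diffOpApply p₂ q := by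
  classical
  set S := (p₁ + p₂).support ∪ (p₁.support ∪ p₂.support) with hS
  rw [diffOpApply_eq_sum_subset q (S := S) (Finset.subset_union_left),
    diffOpApply_eq_sum_subset q (S := S)
      ((Finset.subset_union_left).trans Finset.subset_union_right),
    diffOpApply_eq_sum_subset q (S := S)
      ((Finset.subset_union_right).trans Finset.subset_union_right),
    ← Finset.sum_add_distrib]
  apply Finset.sum_congr rfl
  intro d _
  rw [MvPolynomial.coeff_add, add_smul]

lemma diffOpApply_monomial (d : Fin n →₀ ℕ) (c : ℝ) (q : MvPolynomial (Fin n) ℝ) :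
    diffOpApply (monomial d c) q = c • Dpow d q := by
  classical
  rw [diffOpApply_eq_sum_subset q (S := {d}) support_monomial_subset, Finset.sum_singleton,
    coeff_monomial, if_pos rfl]

end Macd

namespace Macd

variable {n : ℕ}

lemma sq_P_apply (j : Fin n) (r : MvPolynomial (Fin n) ℝ) :
    (P j ^ 2) r = pderiv j (pderiv j r) := by
  rw [sq, Module.End.mul_apply]; rfl

lemma totalDegree_pderiv_le (i : Fin n) (p : MvPolynomial (Fin n) ℝ) (m : ℕ)
    (h : p.totalDegree ≤ m + 1) : (pderiv i p).totalDegree ≤ m := by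
  conv_lhs => rw [p.as_sum, map_sum]
  refine (totalDegree_finset_sum _ _).trans (Finset.sup_le ?_)
  intro s hs
  rw [pderiv_monomial]
  rcases eq_or_ne (s i) 0 with h0 | h0
  · simp [h0]
  · refine (totalDegree_monomial_le _ _).trans ?_
    have hle : Finsupp.single i 1 ≤ s := Finsupp.single_le_iff.mpr (Nat.one_le_iff_ne_zero.mpr h0)
    have hsum : ((s - Finsupp.single i 1).sum fun _ e => e) + 1 = s.sum fun _ e => e := by
      conv_rhs => rw [← tsub_add_cancel_of_le hle]
      rw [Finsupp.sum_add_index' (fun _ => rfl) (fun _ _ _ => rfl)]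
      simp [Finsupp.sum_single_index]
    have hconv : ((s - Finsupp.single i 1).sum fun _ ↦ id)
        = ((s - Finsupp.single i 1).sum fun _ e => e) := rfl
    rw [hconv]
    have := (le_totalDegree hs).trans h
    omega

lemma pderiv_eq_zero_of_td_zero (i : Fin n) {p : MvPolynomial (Fin n) ℝ}
    (h : p.totalDegree = 0) : pderiv i p = 0 := by
  conv_lhs => rw [p.as_sum, map_sum]
  apply Finset.sum_eq_zero
  intro s hs
  have hsi : s i = 0 := (totalDegree_eq_zero_iff _ p).mp h s hs i
  rw [pderiv_monomial, hsi]
  simp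

lemma totalDegree_lap_le (p : MvPolynomial (Fin n) ℝ) (m : ℕ)
    (h : p.totalDegree ≤ m + 2) : (polyLaplacian n p).totalDegree ≤ m := by
  rw [polyLaplacian, LinearMap.sum_apply]
  refine (totalDegree_finset_sum _ _).trans (Finset.sup_le ?_)
  intro i _
  rw [sq_P_apply]
  exact totalDegree_pderiv_le i _ m (totalDegree_pderiv_le i p (m+1) h)

lemma lap_eq_zero_of_td_le_one {p : MvPolynomial (Fin n) ℝ}
    (h : p.totalDegree ≤ 1) : polyLaplacian n p = 0 := by
  rw [polyLaplacian, LinearMap.sum_apply]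
  apply Finset.sum_eq_zero
  intro i _
  rw [sq_P_apply, pderiv_eq_zero_of_td_zero i (Nat.le_zero.mp (totalDegree_pderiv_le i p 0 h))]

lemma lap_pow_eq_zero : ∀ (k : ℕ) (p : MvPolynomial (Fin n) ℝ),
    p.totalDegree < 2 * k → (polyLaplacian n ^ k) p = 0 := by
  intro k
  induction k with
  | zero => intro p hp; omega
  | succ k ih =>
    intro p hp
    rw [pow_succ, Module.End.mul_apply]
    rcases le_or_gt p.totalDegree 1 with h1 | h1
    · rw [lap_eq_zero_of_td_le_one h1, map_zero]
    · apply ih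
      have h2 : p.totalDegree ≤ (p.totalDegree - 2) + 2 := by omega
      have := totalDegree_lap_le p (p.totalDegree - 2) h2
      omega

noncomputable def cexp (k : ℕ) : ℝ := (-(1 : ℝ) / 2) ^ k / (Nat.factorial k : ℝ)

lemma expNegHalfLap_eq_sum (p : MvPolynomial (Fin n) ℝ) {N : ℕ} (hN : p.totalDegree + 1 ≤ N) :
    expNegHalfLap p = ∑ k ∈ Finset.range N, cexp k • ((polyLaplacian n ^ k) p) := by
  rw [expNegHalfLap]
  exact Finset.sum_subset (Finset.range_subset_range.mpr hN) (fun k _ hk => by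
    rw [Finset.mem_range, not_lt] at hk
    rw [lap_pow_eq_zero k p (by omega), smul_zero])

lemma expNegHalfLap_add (p q : MvPolynomial (Fin n) ℝ) :
    expNegHalfLap (p + q) = expNegHalfLap p + expNegHalfLap q := by
  set N := (p + q).totalDegree + p.totalDegree + q.totalDegree + 1 with hN
  rw [expNegHalfLap_eq_sum (p + q) (N := N) (by omega),
    expNegHalfLap_eq_sum p (N := N) (by omega),
    expNegHalfLap_eq_sum q (N := N) (by omega), ← Finset.sum_add_distrib]
  apply Finset.sum_congr rfl
  intro k _
  rw [map_add, smul_add]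

lemma expNegHalfLap_smul (c : ℝ) (p : MvPolynomial (Fin n) ℝ) :
    expNegHalfLap (c • p) = c • expNegHalfLap p := by
  set N := (c • p).totalDegree + p.totalDegree + 1 with hN
  rw [expNegHalfLap_eq_sum (c • p) (N := N) (by omega),
    expNegHalfLap_eq_sum p (N := N) (by omega), Finset.smul_sum]
  apply Finset.sum_congr rfl
  intro k _
  rw [map_smul, smul_comm]

lemma expNegHalfLap_C (c : ℝ) : expNegHalfLap (C c : MvPolynomial (Fin n) ℝ) = C c := by
  rw [expNegHalfLap, totalDegree_C]
  simp

lemma pderiv_lap (i : Fin n) (p : MvPolynomial (Fin n) ℝ) :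
    pderiv i (polyLaplacian n p) = polyLaplacian n (pderiv i p) := by
  rw [polyLaplacian, LinearMap.sum_apply, LinearMap.sum_apply, map_sum]
  apply Finset.sum_congr rfl
  intro j _
  rw [sq_P_apply, sq_P_apply, pderiv_comm' i j, pderiv_comm' i j]

lemma pderiv_lap_pow (i : Fin n) (k : ℕ) (p : MvPolynomial (Fin n) ℝ) :
    pderiv i ((polyLaplacian n ^ k) p) = (polyLaplacian n ^ k) (pderiv i p) := by
  induction k generalizing p with
  | zero => simp
  | succ k ih =>
    rw [pow_succ, Module.End.mul_apply, ih (polyLaplacian n p), pderiv_lap,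
      ← Module.End.mul_apply, ← pow_succ]

lemma expNegHalfLap_pderiv (i : Fin n) (p : MvPolynomial (Fin n) ℝ) :
    expNegHalfLap (pderiv i p) = pderiv i (expNegHalfLap p) := by
  set N := p.totalDegree + 1 with hN
  have h1 : (pderiv i p).totalDegree + 1 ≤ N := by
    have := totalDegree_pderiv_le i p p.totalDegree (by omega)
    omega
  rw [expNegHalfLap_eq_sum (pderiv i p) (N := N) h1, expNegHalfLap, map_sum]
  apply Finset.sum_congr rfl
  intro k _
  rw [Derivation.map_smul, pderiv_lap_pow]
  simp only [cexp]

lemma lap_X_mul (i : Fin n) (p : MvPolynomial (Fin n) ℝ) :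
    polyLaplacian n (X i * p) = X i * polyLaplacian n p + (2 : ℝ) • pderiv i p := by
  rw [polyLaplacian, LinearMap.sum_apply, LinearMap.sum_apply]
  have key : ∀ j : Fin n, pderiv j (pderiv j (X i * p)) =
      X i * pderiv j (pderiv j p) + (if j = i then (2:ℝ) • pderiv i p else 0) := by
    intro j
    rcases eq_or_ne j i with rfl | hji
    · simp only [if_pos rfl, pderiv_mul, pderiv_X_self, one_mul, map_add, two_smul, if_true]
      ring
    · simp only [if_neg hji, pderiv_mul, pderiv_X_of_ne (Ne.symm hji), zero_mul, zero_add,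
        add_zero]
  calc ∑ j : Fin n, (P j ^ 2) (X i * p)
      = ∑ j : Fin n, (X i * pderiv j (pderiv j p) + (if j = i then (2:ℝ) • pderiv i p else 0)) := by
        apply Finset.sum_congr rfl; intro j _; rw [sq_P_apply, key]
    _ = X i * ∑ j : Fin n, pderiv j (pderiv j p) + (2:ℝ) • pderiv i p := by
        rw [Finset.sum_add_distrib, Finset.mul_sum, Finset.sum_ite_eq' Finset.univ i
          (fun _ => (2:ℝ) • pderiv i p), if_pos (Finset.mem_univ i)]
    _ = X i * ∑ j : Fin n, (P j ^ 2) p + (2:ℝ) • pderiv i p := by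
        have h2 : ∑ j : Fin n, pderiv j (pderiv j p) = ∑ j : Fin n, (P j ^ 2) p :=
          Finset.sum_congr rfl (fun j _ => (sq_P_apply j p).symm)
        rw [h2]

end Macd

namespace Macd

variable {n : ℕ}

lemma lap_pow_X_mul (i : Fin n) (k : ℕ) (p : MvPolynomial (Fin n) ℝ) :
    (polyLaplacian n ^ (k+1)) (X i * p) =
      X i * (polyLaplacian n ^ (k+1)) p
        + ((2 * (k+1) : ℕ) : ℝ) • pderiv i ((polyLaplacian n ^ k) p) := by
  induction k generalizing p with
  | zero =>
    rw [pow_one, lap_X_mul]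
    norm_num
  | succ k ih =>
    have h1 : (polyLaplacian n ^ (k+2)) (X i * p)
        = (polyLaplacian n ^ (k+1)) (polyLaplacian n (X i * p)) := by
      rw [← Module.End.mul_apply, ← pow_succ]
    rw [h1, lap_X_mul, map_add, map_smul, ih]
    have h2 : (polyLaplacian n ^ (k+1)) (pderiv i p)
        = pderiv i ((polyLaplacian n ^ (k+1)) p) := (pderiv_lap_pow i (k+1) p).symm
    have h3 : (polyLaplacian n ^ (k+2)) p
        = (polyLaplacian n ^ (k+1)) (polyLaplacian n p) := by
      rw [← Module.End.mul_apply, ← pow_succ]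
    have h4 : pderiv i ((polyLaplacian n ^ k) (polyLaplacian n p))
        = pderiv i ((polyLaplacian n ^ (k+1)) p) := by
      rw [← Module.End.mul_apply, ← pow_succ]
    rw [h2, h3, h4]
    have h5 : ((2 * (k + 1 + 1) : ℕ) : ℝ) = ((2 * (k + 1) : ℕ) : ℝ) + 2 := by push_cast; ring
    rw [h5, add_smul, add_assoc]

lemma cexp_succ_mul (k : ℕ) : cexp (k+1) * (2 * (k+1) : ℕ) = - cexp k := by
  rw [cexp, cexp, pow_succ, Nat.factorial_succ]
  push_cast
  have h1 : ((Nat.factorial k : ℝ)) ≠ 0 := Nat.cast_ne_zero.mpr (Nat.factorial_ne_zero k)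
  field_simp

lemma expNegHalfLap_X_mul (i : Fin n) (p : MvPolynomial (Fin n) ℝ) :
    expNegHalfLap (X i * p) = X i * expNegHalfLap p - pderiv i (expNegHalfLap p) := by
  obtain ⟨M, hM⟩ : ∃ M, M = p.totalDegree + 1 := ⟨_, rfl⟩
  have hXp : (X i * p).totalDegree + 1 ≤ M + 1 := by
    have h1 := totalDegree_mul (X i) p
    have h2 := totalDegree_X (R := ℝ) i
    omega
  rw [expNegHalfLap_eq_sum (X i * p) (N := M + 1) hXp]
  rw [Finset.sum_range_succ']
  have hterm : ∀ k ∈ Finset.range M, cexp (k+1) • ((polyLaplacian n ^ (k+1)) (X i * p))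
      = X i * (cexp (k+1) • (polyLaplacian n ^ (k+1)) p)
        - cexp k • pderiv i ((polyLaplacian n ^ k) p) := by
    intro k _
    rw [lap_pow_X_mul, smul_add, smul_smul, cexp_succ_mul, neg_smul, sub_eq_add_neg,
      mul_smul_comm]
  rw [Finset.sum_congr rfl hterm]
  rw [Finset.sum_sub_distrib]
  have hc0 : cexp 0 = 1 := by simp [cexp]
  have h5 : (∑ k ∈ Finset.range M, X i * (cexp (k+1) • (polyLaplacian n ^ (k+1)) p))
      + cexp 0 • (polyLaplacian n ^ 0) (X i * p)
      = X i * expNegHalfLap p := by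
    rw [expNegHalfLap_eq_sum p (N := M + 1) (by omega), Finset.sum_range_succ' _ M,
      mul_add, Finset.mul_sum]
    simp only [pow_zero, hc0, Module.End.one_apply, one_smul]
  have h6 : (∑ k ∈ Finset.range M, cexp k • pderiv i ((polyLaplacian n ^ k) p))
      = pderiv i (expNegHalfLap p) := by
    rw [expNegHalfLap_eq_sum p (N := M) (by omega), map_sum]
    apply Finset.sum_congr rfl
    intro k _
    rw [Derivation.map_smul]
  rw [sub_add_eq_add_sub, h5, h6]

end Macd

namespace Macd

open Real MeasureTheory

variable {n : ℕ}

/-- 1D Gaussian moment -/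
noncomputable def mom (k : ℕ) : ℝ := ∫ t : ℝ, t ^ k * Real.exp (-t^2/2)

lemma integrable_pow_gauss (k : ℕ) :
    Integrable fun t : ℝ => t ^ k * Real.exp (-t^2/2) := by
  have h := integrable_rpow_mul_exp_neg_mul_sq (b := (1:ℝ)/2) (by norm_num)
    (s := (k : ℝ)) (by have := Nat.cast_nonneg (α := ℝ) k; linarith)
  have heq : (fun t : ℝ => t ^ (k:ℝ) * Real.exp (-(1/2) * t ^ 2))
      = fun t : ℝ => t ^ k * Real.exp (-t^2/2) := by
    funext t
    rw [Real.rpow_natCast]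
    ring_nf
  rwa [heq] at h

lemma gauss_eq (t : ℝ) : Real.exp (-t^2/2) = Real.exp (-(1/2) * t^2) := by ring_nf

lemma mom_zero : mom 0 = Real.sqrt (2 * Real.pi) := by
  have h : mom 0 = ∫ t : ℝ, Real.exp (-(1/2) * t^2) := by
    rw [mom]
    congr 1
    funext t
    rw [pow_zero, one_mul, gauss_eq]
  rw [h, integral_gaussian]
  congr 1
  rw [div_div_eq_mul_div, div_one] -- π / (1/2) = 2π ?
  ring

lemma hasDerivAt_gauss (t : ℝ) :
    HasDerivAt (fun t : ℝ => Real.exp (-t^2/2)) (-t * Real.exp (-t^2/2)) t := by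
  have h1 : HasDerivAt (fun t : ℝ => -t^2/2) (-t) t := by
    have := ((hasDerivAt_pow 2 t).neg).div_const 2
    simpa using this.congr_deriv (by ring)
  simpa [mul_comm] using h1.exp

lemma mom_one : mom 1 = 0 := by
  have hderiv : ∀ t : ℝ, HasDerivAt (fun t : ℝ => -Real.exp (-t^2/2))
      (t ^ 1 * Real.exp (-t^2/2)) t := by
    intro t
    exact (hasDerivAt_gauss t).neg.congr_deriv (by ring)
  exact integral_eq_zero_of_hasDerivAt_of_integrable hderiv (integrable_pow_gauss 1)
    ((integrable_pow_gauss 0).neg.congr (by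
      filter_upwards with t
      simp))

lemma mom_rec (k : ℕ) : mom (k + 2) = (k + 1 : ℝ) * mom k := by
  set f : ℝ → ℝ := fun t => t ^ (k+1) * Real.exp (-t^2/2) with hf
  set f' : ℝ → ℝ := fun t => (k+1 : ℝ) * (t ^ k * Real.exp (-t^2/2))
    - t ^ (k+2) * Real.exp (-t^2/2) with hf'
  have hderiv : ∀ t : ℝ, HasDerivAt f (f' t) t := by
    intro t
    have h1 := (hasDerivAt_pow (k+1) t).mul (hasDerivAt_gauss t)
    apply h1.congr_deriv
    push_cast
    ring
  have hint' : Integrable f' :=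
    ((integrable_pow_gauss k).const_mul _).sub (integrable_pow_gauss (k+2))
  have h0 := integral_eq_zero_of_hasDerivAt_of_integrable hderiv hint'
    (integrable_pow_gauss (k+1))
  rw [hf', ] at h0
  rw [integral_sub ((integrable_pow_gauss k).const_mul _) (integrable_pow_gauss (k+2))] at h0
  rw [integral_const_mul] at h0
  have : mom (k+2) = ∫ t : ℝ, t ^ (k+2) * Real.exp (-t^2/2) := rfl
  rw [this]
  rw [sub_eq_zero] at h0
  rw [← h0]
  rfl

/-- the key 1D identity `m(k+1) = k * m(k-1)` (with junk-value conventions) -/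
lemma mom_succ (k : ℕ) : mom (k + 1) = (k : ℝ) * mom (k - 1) := by
  cases k with
  | zero => simp [mom_one]
  | succ k => rw [mom_rec]; push_cast; simp

end Macd

namespace Macd

open Real MeasureTheory

variable {n : ℕ}

/-- Gaussian weight on ℝⁿ -/
noncomputable def gaussW (n : ℕ) (x : Fin n → ℝ) : ℝ := Real.exp (-(∑ i, x i ^ 2)/2)

lemma gaussW_eq_prod (x : Fin n → ℝ) : gaussW n x = ∏ i, Real.exp (-(x i)^2/2) := by
  rw [gaussW, ← Real.exp_sum]
  congr 1
  rw [← Finset.sum_div, ← Finset.sum_neg_distrib]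

lemma integrand_monomial (d : Fin n →₀ ℕ) (c : ℝ) :
    (fun x : Fin n → ℝ => eval x (monomial d c) * gaussW n x)
      = fun x : Fin n → ℝ => c * ∏ i, ((x i) ^ (d i) * Real.exp (-(x i)^2/2)) := by
  funext x
  rw [eval_monomial, gaussW_eq_prod, Finsupp.prod_fintype _ _ (fun i => pow_zero _),
    mul_assoc, ← Finset.prod_mul_distrib]

lemma integrable_poly_gauss (p : MvPolynomial (Fin n) ℝ) :
    Integrable fun x : Fin n → ℝ => eval x p * gaussW n x := by
  induction p using MvPolynomial.induction_on' with
  | monomial d c =>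
    rw [integrand_monomial]
    exact (Integrable.fin_nat_prod
      (fun i => integrable_pow_gauss (d i))).const_mul c
  | add p q hp hq =>
    have : (fun x : Fin n → ℝ => eval x (p + q) * gaussW n x)
        = fun x => eval x p * gaussW n x + eval x q * gaussW n x := by
      funext x; rw [map_add, add_mul]
    rw [this]
    exact hp.add hq

/-- The normalized Gaussian integral functional -/
noncomputable def Ifun (r : MvPolynomial (Fin n) ℝ) : ℝ :=
  (2 * Real.pi) ^ (-(n : ℝ)/2) * ∫ x : Fin n → ℝ, eval x r * gaussW n x

lemma Ifun_monomial (d : Fin n →₀ ℕ) (c : ℝ) :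
    Ifun (monomial d c) = (2 * Real.pi) ^ (-(n : ℝ)/2) * (c * ∏ i, mom (d i)) := by
  rw [Ifun, integrand_monomial]
  rw [integral_const_mul, MeasureTheory.volume_pi, MeasureTheory.integral_fin_nat_prod_eq_prod
    (f := fun i t => t ^ (d i) * Real.exp (-t^2/2))]
  rfl

lemma Ifun_add (a b : MvPolynomial (Fin n) ℝ) : Ifun (a + b) = Ifun a + Ifun b := by
  rw [Ifun, Ifun, Ifun]
  have : (fun x : Fin n → ℝ => eval x (a + b) * gaussW n x)
      = fun x => eval x a * gaussW n x + eval x b * gaussW n x := by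
    funext x; rw [map_add, add_mul]
  rw [this, integral_add (integrable_poly_gauss a) (integrable_poly_gauss b), mul_add]

lemma Ifun_sub (a b : MvPolynomial (Fin n) ℝ) : Ifun (a - b) = Ifun a - Ifun b := by
  have h := Ifun_add (a - b) b
  rw [sub_add_cancel] at h
  linarith

lemma Ifun_smul (c : ℝ) (a : MvPolynomial (Fin n) ℝ) : Ifun (c • a) = c * Ifun a := by
  rw [Ifun, Ifun]
  have : (fun x : Fin n → ℝ => eval x (c • a) * gaussW n x)
      = fun x => c * (eval x a * gaussW n x) := by
    funext x
    rw [smul_eq_C_mul, map_mul, eval_C, mul_assoc]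
  rw [this, integral_const_mul]
  ring

lemma const_cancel : (2 * Real.pi : ℝ) ^ (-(n : ℝ)/2) * (Real.sqrt (2 * Real.pi)) ^ n = 1 := by
  have h2π : (0:ℝ) < 2 * Real.pi := by positivity
  rw [Real.sqrt_eq_rpow, ← Real.rpow_natCast ((2 * Real.pi) ^ ((1:ℝ)/2)) n,
    ← Real.rpow_mul h2π.le, ← Real.rpow_add h2π]
  rw [show -(n : ℝ)/2 + 1/2 * n = 0 by ring, Real.rpow_zero]

lemma Ifun_one : Ifun (1 : MvPolynomial (Fin n) ℝ) = 1 := by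
  have h1 : (1 : MvPolynomial (Fin n) ℝ) = monomial 0 1 := by
    rw [← C_1, C_apply]
  rw [h1, Ifun_monomial]
  simp only [Finsupp.coe_zero, Pi.zero_apply, mom_zero, one_mul]
  rw [Finset.prod_const, Finset.card_univ, Fintype.card_fin]
  exact const_cancel

lemma prod_mom (d : Fin n →₀ ℕ) (i : Fin n) :
    ∏ j, mom (((d + Finsupp.single i 1) : Fin n →₀ ℕ) j)
      = (d i : ℝ) * ∏ j, mom (((d - Finsupp.single i 1) : Fin n →₀ ℕ) j) := by
  rw [← Finset.mul_prod_erase Finset.univ _ (Finset.mem_univ i),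
    ← Finset.mul_prod_erase Finset.univ
      (fun j => mom (((d - Finsupp.single i 1) : Fin n →₀ ℕ) j)) (Finset.mem_univ i),
    ← mul_assoc]
  congr 1
  · simp only [Finsupp.add_apply, Finsupp.tsub_apply, Finsupp.single_apply]
    rw [if_pos trivial]
    exact mom_succ (d i)
  · apply Finset.prod_congr rfl
    intro j hj
    have hij : i ≠ j := fun h => (Finset.mem_erase.mp hj).1 h.symm
    simp only [Finsupp.add_apply, Finsupp.tsub_apply, Finsupp.single_apply, if_neg hij]
    simp

lemma X_mul_monomial' (i : Fin n) (d : Fin n →₀ ℕ) (c : ℝ) :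
    (X i : MvPolynomial (Fin n) ℝ) * monomial d c = monomial (d + Finsupp.single i 1) c := by
  rw [X, monomial_mul, one_mul, add_comm]

lemma Ifun_IBP (i : Fin n) (s : MvPolynomial (Fin n) ℝ) :
    Ifun (X i * s) = Ifun (pderiv i s) := by
  induction s using MvPolynomial.induction_on' with
  | monomial d c =>
    rw [X_mul_monomial', pderiv_monomial, Ifun_monomial, Ifun_monomial]
    rw [prod_mom]
    push_cast
    ring
  | add p q hp hq =>
    rw [mul_add, map_add, Ifun_add, Ifun_add, hp, hq]

end Macd

namespace Macd

open Real MeasureTheory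

variable {n : ℕ}

lemma K_lemma (q : MvPolynomial (Fin n) ℝ) :
    Ifun (expNegHalfLap q) = eval (0 : Fin n → ℝ) q := by
  induction q using MvPolynomial.induction_on' with
  | add p q hp hq => rw [expNegHalfLap_add, Ifun_add, hp, hq, map_add]
  | monomial d c =>
    by_cases h0 : d = 0
    · subst h0
      rw [show (monomial (0 : Fin n →₀ ℕ) c : MvPolynomial (Fin n) ℝ) = C c from (C_apply).symm,
        expNegHalfLap_C, show (C c : MvPolynomial (Fin n) ℝ) = c • 1 by
          rw [smul_eq_C_mul, mul_one],
        Ifun_smul, Ifun_one]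
      simp
    · obtain ⟨i, hi⟩ := Finsupp.ne_iff.mp h0
      rw [Finsupp.coe_zero, Pi.zero_apply] at hi
      have hle : Finsupp.single i 1 ≤ d :=
        Finsupp.single_le_iff.mpr (Nat.one_le_iff_ne_zero.mpr hi)
      have hsplit : (d - Finsupp.single i 1) + Finsupp.single i 1 = d :=
        tsub_add_cancel_of_le hle
      have hXm : (monomial d c : MvPolynomial (Fin n) ℝ)
          = X i * monomial (d - Finsupp.single i 1) c := by
        rw [X_mul_monomial', hsplit]
      rw [hXm, expNegHalfLap_X_mul, Ifun_sub, Ifun_IBP i, sub_self]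
      rw [← hXm, eval_monomial]
      have hprod : (d.prod fun j e => (0 : Fin n → ℝ) j ^ e) = 0 := by
        apply Finset.prod_eq_zero (Finsupp.mem_support_iff.mpr hi)
        exact zero_pow hi
      rw [hprod, mul_zero]

lemma R_X_mul (i : Fin n) (p q : MvPolynomial (Fin n) ℝ) :
    Ifun (expNegHalfLap (X i * p) * expNegHalfLap q)
      = Ifun (expNegHalfLap p * expNegHalfLap (pderiv i q)) := by
  rw [expNegHalfLap_X_mul, sub_mul, Ifun_sub, mul_assoc, Ifun_IBP i, pderiv_mul, Ifun_add,
    expNegHalfLap_pderiv]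
  ring

lemma B_monomial (d : Fin n →₀ ℕ) (c : ℝ) (q : MvPolynomial (Fin n) ℝ) :
    eval (0 : Fin n → ℝ) (diffOpApply (monomial d c) q)
      = c * eval (0 : Fin n → ℝ) (Dpow d q) := by
  rw [diffOpApply_monomial, smul_eq_C_mul, map_mul, eval_C]

lemma main_mono : ∀ (N : ℕ) (d : Fin n →₀ ℕ), (d.sum fun _ k => k) = N →
    ∀ (c : ℝ) (q : MvPolynomial (Fin n) ℝ),
      eval (0 : Fin n → ℝ) (diffOpApply (monomial d c) q)
        = Ifun (expNegHalfLap (monomial d c) * expNegHalfLap q) := by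
  intro N
  induction N using Nat.strong_induction_on with
  | _ N ih =>
    intro d hd c q
    by_cases h0 : d = 0
    · subst h0
      rw [B_monomial, Dpow_zero, Module.End.one_apply]
      rw [show (monomial (0 : Fin n →₀ ℕ) c : MvPolynomial (Fin n) ℝ) = C c from (C_apply).symm,
        expNegHalfLap_C, show (C c : MvPolynomial (Fin n) ℝ) * expNegHalfLap q
          = c • expNegHalfLap q from (smul_eq_C_mul _ c).symm,
        Ifun_smul, K_lemma]
    · obtain ⟨i, hi⟩ := Finsupp.ne_iff.mp h0
      rw [Finsupp.coe_zero, Pi.zero_apply] at hi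
      have hle : Finsupp.single i 1 ≤ d :=
        Finsupp.single_le_iff.mpr (Nat.one_le_iff_ne_zero.mpr hi)
      have hsplit : (d - Finsupp.single i 1) + Finsupp.single i 1 = d :=
        tsub_add_cancel_of_le hle
      have hXm : (monomial d c : MvPolynomial (Fin n) ℝ)
          = X i * monomial (d - Finsupp.single i 1) c := by
        rw [X_mul_monomial', hsplit]
      have hsum : ((d - Finsupp.single i 1).sum fun _ k => k) + 1 = N := by
        rw [← hd]
        conv_rhs => rw [← hsplit]
        rw [Finsupp.sum_add_index' (fun _ => rfl) (fun _ _ _ => rfl)]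
        simp [Finsupp.sum_single_index]
      have hlt : ((d - Finsupp.single i 1).sum fun _ k => k) < N := by omega
      rw [B_monomial]
      conv_lhs => rw [← hsplit, Dpow_add_single, Module.End.mul_apply]
      rw [← B_monomial]
      rw [hXm, R_X_mul]
      exact ih _ hlt _ rfl c (pderiv i q)

lemma main_key (p q : MvPolynomial (Fin n) ℝ) :
    eval (0 : Fin n → ℝ) (diffOpApply p q)
      = Ifun (expNegHalfLap p * expNegHalfLap q) := by
  induction p using MvPolynomial.induction_on' with
  | monomial d c => exact main_mono _ d rfl c q
  | add p₁ p₂ h1 h2 =>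
    rw [diffOpApply_add_left, map_add, h1, h2, expNegHalfLap_add, add_mul, Ifun_add]

end Macd


/-- Macdonald's identity: `[p,q]_∂ = (p(∂)q)(0)` equals
`(2π)^{-n/2} ∫_{ℝⁿ} (e^{-Δ/2}p)(x) (e^{-Δ/2}q)(x) e^{-x²/2} dx`. -/
theorem bilinear_form_partial_gaussian_integral {n : ℕ} (p q : MvPolynomial (Fin n) ℝ) :
    eval (0 : Fin n → ℝ) (diffOpApply p q) =
      (2 * Real.pi) ^ (-(n : ℝ) / 2) *
        ∫ x : Fin n → ℝ,
          eval x (expNegHalfLap p) * eval x (expNegHalfLap q) *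
            Real.exp (-(∑ i, x i ^ 2) / 2) := by
  rw [Macd.main_key p q, Macd.Ifun]
  congr 1
  apply MeasureTheory.integral_congr_ae
  filter_upwards with x
  rw [map_mul]
  rfl
end

section
/- With D_{i,N} the type-A Dunkl operators as above, for every j ∈ {1,…,N} the commutator [∑_{i=1}^N D_{i,N}², x_j] equals 2 D_{j,N} as operators on the polynomial ring ℂ[x_1,…,x_N]. -/
open MvPolynomial Finset Classical

/-- The variable-swap operator `σ_{ij}`. -/
noncomputable def swapOp {N : ℕ} (i j : Fin N) (p : MvPolynomial (Fin N) ℂ) :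
    MvPolynomial (Fin N) ℂ :=
  rename (Equiv.swap i j) p

/-- The divided difference `(x_i - x_j)⁻¹ (1 - σ_{ij}) p`, well defined on polynomials
since `(1 - σ_{ij})p` is divisible by `x_i - x_j`. -/
noncomputable def divDiff {N : ℕ} (i j : Fin N) (p : MvPolynomial (Fin N) ℂ) :
    MvPolynomial (Fin N) ℂ :=
  if h : (X i - X j) ∣ (p - swapOp i j p) then h.choose else 0

/-- The type-A Dunkl operator `D_{i,N} = ∂/∂x_i + θ ∑_{j ≠ i} (x_i - x_j)⁻¹ (1 - σ_{ij})`. -/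
noncomputable def dunkl {N : ℕ} (θ : ℂ) (i : Fin N) (p : MvPolynomial (Fin N) ℂ) :
    MvPolynomial (Fin N) ℂ :=
  pderiv i p + θ • ∑ j ∈ Finset.univ.filter (fun j => j ≠ i), divDiff i j p

namespace DunklAux

variable {N : ℕ}

lemma X_sub_X_ne_zero {i j : Fin N} (h : i ≠ j) :
    (X i - X j : MvPolynomial (Fin N) ℂ) ≠ 0 := by
  intro hc
  rw [sub_eq_zero] at hc
  exact h (X_injective hc)

lemma sub_swap_dvd {i j : Fin N} (h : i ≠ j) (p : MvPolynomial (Fin N) ℂ) :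
    (X i - X j) ∣ (p - swapOp i j p) := by
  classical
  let e : Option {k : Fin N // k ≠ j} ≃ Fin N := Equiv.optionSubtypeNe j
  let A : MvPolynomial (Fin N) ℂ ≃ₐ[ℂ] Polynomial (MvPolynomial {k : Fin N // k ≠ j} ℂ) :=
    (renameEquiv ℂ e.symm).trans (optionEquivLeft ℂ {k : Fin N // k ≠ j})
  have hAX : ∀ k : Fin N, A (X k) =
      if hk : k = j then Polynomial.X else Polynomial.C (X ⟨k, hk⟩) := by
    intro k
    by_cases hk : k = j
    · subst hk
      simp only [dif_pos]
      show optionEquivLeft ℂ _ (rename e.symm (X k)) = _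
      rw [rename_X]
      have : e.symm k = none := Equiv.optionSubtypeNe_symm_self k
      rw [this, optionEquivLeft_X_none]
    · simp only [dif_neg hk]
      show optionEquivLeft ℂ _ (rename e.symm (X k)) = _
      rw [rename_X]
      have : e.symm k = some ⟨k, hk⟩ := Equiv.optionSubtypeNe_symm_of_ne hk
      rw [this, optionEquivLeft_X_some]
  set a : MvPolynomial {k : Fin N // k ≠ j} ℂ := X ⟨i, h⟩ with ha
  -- the evaluation ring hom
  let ψ : MvPolynomial (Fin N) ℂ →+* MvPolynomial {k : Fin N // k ≠ j} ℂ :=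
    (Polynomial.evalRingHom a).comp (A : MvPolynomial (Fin N) ℂ →+* _)
  have hψj : ψ (X j) = a := by
    simp only [ψ, RingHom.comp_apply]
    rw [show ((A : MvPolynomial (Fin N) ℂ →+* _) (X j)) = A (X j) from rfl, hAX]
    simp
  have hψX : ∀ (k : Fin N) (hk : k ≠ j), ψ (X k) = X ⟨k, hk⟩ := by
    intro k hk
    simp only [ψ, RingHom.comp_apply]
    rw [show ((A : MvPolynomial (Fin N) ℂ →+* _) (X k)) = A (X k) from rfl, hAX]
    rw [dif_neg hk]
    simp
  have key : ψ (p - swapOp i j p) = 0 := by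
    have : ψ.comp ((rename (Equiv.swap i j) : MvPolynomial (Fin N) ℂ →ₐ[ℂ] _) :
        MvPolynomial (Fin N) ℂ →+* _) = ψ := by
      apply ringHom_ext
      · intro r
        simp [RingHom.comp_apply, rename_C]
      · intro k
        simp only [RingHom.comp_apply, RingHom.coe_coe, rename_X]
        rcases eq_or_ne k i with rfl | hki
        · rw [Equiv.swap_apply_left, hψj, hψX k h]
        rcases eq_or_ne k j with rfl | hkj
        · rw [Equiv.swap_apply_right, hψX i h, hψj]
        · rw [Equiv.swap_apply_of_ne_of_ne hki hkj]
    have h2 : ψ (swapOp i j p) = ψ p := by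
      conv_rhs => rw [← this]
      rfl
    rw [map_sub, h2, sub_self]
  -- conclude divisibility
  have hdvd : (Polynomial.X - Polynomial.C a) ∣ A (p - swapOp i j p) := by
    rw [Polynomial.dvd_iff_isRoot]
    exact key
  obtain ⟨r, hr⟩ := hdvd
  refine ⟨-(A.symm r), ?_⟩
  apply A.injective
  rw [hr, map_mul]
  have : A (X i - X j) = Polynomial.C a - Polynomial.X := by
    rw [map_sub, hAX, hAX, dif_neg h, dif_pos rfl]
  rw [map_neg, AlgEquiv.apply_symm_apply, this]
  ring

lemma divDiff_spec {i j : Fin N} (h : i ≠ j) (p : MvPolynomial (Fin N) ℂ) :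
    (X i - X j) * divDiff i j p = p - swapOp i j p := by
  rw [divDiff, dif_pos (sub_swap_dvd h p)]
  exact ((sub_swap_dvd h p).choose_spec).symm

lemma divDiff_eq {i j : Fin N} (h : i ≠ j) {p q : MvPolynomial (Fin N) ℂ}
    (hq : (X i - X j) * q = p - swapOp i j p) : divDiff i j p = q :=
  mul_left_cancel₀ (X_sub_X_ne_zero h) (by rw [divDiff_spec h, hq])

end DunklAux

namespace DunklAux

variable {N : ℕ}

lemma swapOp_comm (i j : Fin N) (p : MvPolynomial (Fin N) ℂ) :
    swapOp i j p = swapOp j i p := by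
  rw [swapOp, swapOp, Equiv.swap_comm]

lemma divDiff_rename (r : Equiv.Perm (Fin N)) {a b : Fin N} (hab : a ≠ b)
    (p : MvPolynomial (Fin N) ℂ) :
    divDiff (r a) (r b) (rename r p) = rename r (divDiff a b p) := by
  apply divDiff_eq (fun hc => hab (r.injective hc))
  have h1 : (X (r a) - X (r b) : MvPolynomial (Fin N) ℂ) = rename r (X a - X b) := by
    simp
  rw [h1, ← map_mul, divDiff_spec hab, map_sub]
  congr 1
  rw [swapOp, swapOp, rename_rename, rename_rename]
  have hfun : ⇑r ∘ ⇑(Equiv.swap a b) = ⇑(Equiv.swap (r a) (r b)) ∘ ⇑r := by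
    funext x
    simp [Equiv.swap_apply_apply]
  rw [hfun]

lemma divDiff_add {i j : Fin N} (h : i ≠ j) (p q : MvPolynomial (Fin N) ℂ) :
    divDiff i j (p + q) = divDiff i j p + divDiff i j q := by
  apply divDiff_eq h
  have hs : swapOp i j (p + q) = swapOp i j p + swapOp i j q := by
    rw [swapOp, swapOp, swapOp, map_add]
  rw [mul_add, divDiff_spec h, divDiff_spec h, hs]
  ring

lemma divDiff_smul {i j : Fin N} (h : i ≠ j) (c : ℂ) (p : MvPolynomial (Fin N) ℂ) :
    divDiff i j (c • p) = c • divDiff i j p := by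
  apply divDiff_eq h
  have : swapOp i j (c • p) = c • swapOp i j p := by
    rw [swapOp, map_smul, swapOp]
  rw [this, mul_smul_comm, divDiff_spec h, smul_sub]

lemma dunkl_add (θ : ℂ) (i : Fin N) (p q : MvPolynomial (Fin N) ℂ) :
    dunkl θ i (p + q) = dunkl θ i p + dunkl θ i q := by
  rw [dunkl, dunkl, dunkl, map_add]
  have : ∑ j ∈ Finset.univ.filter (fun j => j ≠ i), divDiff i j (p + q) =
      (∑ j ∈ Finset.univ.filter (fun j => j ≠ i), divDiff i j p) +
      ∑ j ∈ Finset.univ.filter (fun j => j ≠ i), divDiff i j q := by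
    rw [← Finset.sum_add_distrib]
    refine Finset.sum_congr rfl fun k hk => ?_
    exact divDiff_add (fun hc => (Finset.mem_filter.1 hk).2 hc.symm) p q
  rw [this, smul_add]
  ring

lemma dunkl_smul (θ : ℂ) (i : Fin N) (c : ℂ) (p : MvPolynomial (Fin N) ℂ) :
    dunkl θ i (c • p) = c • dunkl θ i p := by
  rw [dunkl, dunkl]
  have hp : pderiv i (c • p) = c • pderiv i p := (pderiv i).map_smul c p
  have : ∑ j ∈ Finset.univ.filter (fun j => j ≠ i), divDiff i j (c • p) =
      c • ∑ j ∈ Finset.univ.filter (fun j => j ≠ i), divDiff i j p := by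
    rw [Finset.smul_sum]
    refine Finset.sum_congr rfl fun k hk => ?_
    exact divDiff_smul (fun hc => (Finset.mem_filter.1 hk).2 hc.symm) c p
  rw [hp, this, smul_add, smul_comm θ c]

/-- `dunkl` as a linear map. -/
noncomputable def dunklL (θ : ℂ) (i : Fin N) :
    MvPolynomial (Fin N) ℂ →ₗ[ℂ] MvPolynomial (Fin N) ℂ where
  toFun := dunkl θ i
  map_add' := dunkl_add θ i
  map_smul' := dunkl_smul θ i

lemma dunklL_apply (θ : ℂ) (i : Fin N) (p : MvPolynomial (Fin N) ℂ) :
    dunklL θ i p = dunkl θ i p := rfl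

end DunklAux

namespace DunklAux

variable {N : ℕ}

lemma swapOp_mul (i j : Fin N) (p q : MvPolynomial (Fin N) ℂ) :
    swapOp i j (p * q) = swapOp i j p * swapOp i j q := by
  rw [swapOp, swapOp, swapOp, map_mul]

lemma swapOp_add (i j : Fin N) (p q : MvPolynomial (Fin N) ℂ) :
    swapOp i j (p + q) = swapOp i j p + swapOp i j q := by
  rw [swapOp, swapOp, swapOp, map_add]

lemma swapOp_smul (i j : Fin N) (c : ℂ) (p : MvPolynomial (Fin N) ℂ) :
    swapOp i j (c • p) = c • swapOp i j p := by
  rw [swapOp, swapOp, map_smul]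

lemma swapOp_sum {α : Type*} (i j : Fin N) (s : Finset α)
    (f : α → MvPolynomial (Fin N) ℂ) :
    swapOp i j (∑ x ∈ s, f x) = ∑ x ∈ s, swapOp i j (f x) := by
  rw [swapOp, map_sum]
  rfl

lemma swapOp_X (i j k : Fin N) :
    swapOp i j (X k) = X (Equiv.swap i j k) := by
  rw [swapOp, rename_X]

lemma divDiff_X_mul_of_ne {i k j : Fin N} (hik : i ≠ k) (hj1 : j ≠ i) (hj2 : j ≠ k)
    (p : MvPolynomial (Fin N) ℂ) :
    divDiff i k (X j * p) = X j * divDiff i k p := by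
  apply divDiff_eq hik
  have hS : swapOp i k (X j * p) = X j * swapOp i k p := by
    rw [swapOp_mul, swapOp_X, Equiv.swap_apply_of_ne_of_ne hj1 hj2]
  rw [hS, mul_left_comm, divDiff_spec hik]
  ring

lemma divDiff_X_mul_left {i k : Fin N} (hik : i ≠ k) (p : MvPolynomial (Fin N) ℂ) :
    divDiff i k (X i * p) = X i * divDiff i k p + swapOp i k p := by
  apply divDiff_eq hik
  have hS : swapOp i k (X i * p) = X k * swapOp i k p := by
    rw [swapOp_mul, swapOp_X, Equiv.swap_apply_left]
  rw [hS, mul_add, mul_left_comm, divDiff_spec hik]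
  ring

lemma divDiff_X_mul_right {i k : Fin N} (hik : i ≠ k) (p : MvPolynomial (Fin N) ℂ) :
    divDiff i k (X k * p) = X k * divDiff i k p - swapOp i k p := by
  apply divDiff_eq hik
  have hS : swapOp i k (X k * p) = X i * swapOp i k p := by
    rw [swapOp_mul, swapOp_X, Equiv.swap_apply_right]
  rw [hS, mul_sub, mul_left_comm, divDiff_spec hik]
  ring

/-- The commutator `[D_i, x_j]`. -/
noncomputable def commT (θ : ℂ) (i j : Fin N) (p : MvPolynomial (Fin N) ℂ) :
    MvPolynomial (Fin N) ℂ :=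
  if i = j then p + θ • ∑ k ∈ Finset.univ.filter (fun k => k ≠ i), swapOp i k p
  else -(θ • swapOp i j p)

lemma dunkl_X_mul (θ : ℂ) (i j : Fin N) (p : MvPolynomial (Fin N) ℂ) :
    dunkl θ i (X j * p) = X j * dunkl θ i p + commT θ i j p := by
  by_cases hij : i = j
  · subst hij
    rw [commT, if_pos rfl, dunkl, dunkl]
    have h1 : pderiv i (X i * p) = p + X i * pderiv i p := by
      rw [pderiv_mul, pderiv_X_self, one_mul]
    have h2 : ∑ k ∈ Finset.univ.filter (fun k => k ≠ i), divDiff i k (X i * p) =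
        (∑ k ∈ Finset.univ.filter (fun k => k ≠ i), (X i * divDiff i k p)) +
        ∑ k ∈ Finset.univ.filter (fun k => k ≠ i), swapOp i k p := by
      rw [← Finset.sum_add_distrib]
      refine Finset.sum_congr rfl fun k hk => ?_
      exact divDiff_X_mul_left (fun hc => (Finset.mem_filter.1 hk).2 hc.symm) p
    rw [h1, h2, ← Finset.mul_sum]
    simp only [smul_eq_C_mul]
    ring
  · rw [commT, if_neg hij, dunkl, dunkl]
    have hj : j ∈ Finset.univ.filter (fun k => k ≠ i) := by
      simp [Ne.symm hij]
    have h1 : pderiv i (X j * p) = X j * pderiv i p := by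
      rw [pderiv_mul, pderiv_X_of_ne (Ne.symm hij), zero_mul, zero_add]
    have h2 : ∑ k ∈ Finset.univ.filter (fun k => k ≠ i), divDiff i k (X j * p) =
        (X j * divDiff i j p - swapOp i j p) +
        ∑ k ∈ (Finset.univ.filter (fun k => k ≠ i)).erase j, (X j * divDiff i k p) := by
      rw [← Finset.add_sum_erase _ _ hj, divDiff_X_mul_right hij]
      congr 1
      refine Finset.sum_congr rfl fun k hk => ?_
      have hkj : k ≠ j := (Finset.mem_erase.1 hk).1
      have hki : k ≠ i := (Finset.mem_filter.1 (Finset.mem_erase.1 hk).2).2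
      exact divDiff_X_mul_of_ne (Ne.symm hki) (Ne.symm hij) (Ne.symm hkj) p
    have h3 : ∑ k ∈ Finset.univ.filter (fun k => k ≠ i), divDiff i k p =
        divDiff i j p + ∑ k ∈ (Finset.univ.filter (fun k => k ≠ i)).erase j,
          divDiff i k p := (Finset.add_sum_erase _ _ hj).symm
    rw [h1, h2, h3, ← Finset.mul_sum]
    simp only [smul_eq_C_mul]
    ring

lemma dunkl_swapOp (θ : ℂ) {i j : Fin N} (h : i ≠ j) (p : MvPolynomial (Fin N) ℂ) :
    dunkl θ i (swapOp i j p) = swapOp i j (dunkl θ j p) := by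
  set σ : Equiv.Perm (Fin N) := Equiv.swap i j with hσ
  have hσj : σ j = i := Equiv.swap_apply_right i j
  have hσi : σ i = j := Equiv.swap_apply_left i j
  have h1 : pderiv i (swapOp i j p) = swapOp i j (pderiv j p) := by
    rw [swapOp, swapOp]
    have := pderiv_rename σ.injective j p
    rwa [hσj] at this
  have h2 : ∀ k, k ≠ i → divDiff i k (swapOp i j p) = swapOp i j (divDiff j (σ k) p) := by
    intro k hk
    have hab : j ≠ σ k := by
      intro hc
      apply hk
      have h5 := congrArg σ hc
      rw [hσj, hσ, Equiv.swap_apply_self] at h5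
      exact h5.symm
    have := divDiff_rename σ hab p
    rw [hσj] at this
    rw [swapOp, swapOp]
    rw [← this]
    congr 1
    simp [σ]
  have h3 : ∑ k ∈ Finset.univ.filter (fun k => k ≠ i), divDiff i k (swapOp i j p) =
      swapOp i j (∑ m ∈ Finset.univ.filter (fun m => m ≠ j), divDiff j m p) := by
    rw [swapOp_sum]
    refine Finset.sum_equiv σ (fun k => ?_) (fun k hk => ?_)
    · simp only [Finset.mem_filter, Finset.mem_univ, true_and]
      constructor
      · intro hki hc
        apply hki
        have h5 := congrArg σ hc
        rw [hσj, hσ, Equiv.swap_apply_self] at h5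
        exact h5
      · intro hkj hc
        rw [hc, hσi] at hkj
        exact hkj rfl
    · exact h2 k (Finset.mem_filter.1 hk).2
  rw [dunkl, dunkl, h1, h3, ← swapOp_smul, ← swapOp_add]

end DunklAux

open DunklAux

/-- `[∑_i D_{i,N}², x_j] = 2 D_{j,N}` as operators on `ℂ[x_1,…,x_N]`. -/
theorem dunkl_laplacian_mul_commutator {N : ℕ} (θ : ℂ) (j : Fin N)
    (p : MvPolynomial (Fin N) ℂ) :
    (∑ i : Fin N, dunkl θ i (dunkl θ i (X j * p))) -
        X j * ∑ i : Fin N, dunkl θ i (dunkl θ i p) =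
      2 * dunkl θ j p := by
  classical
  have step : ∀ i : Fin N, dunkl θ i (dunkl θ i (X j * p)) =
      X j * dunkl θ i (dunkl θ i p) +
        (commT θ i j (dunkl θ i p) + dunkl θ i (commT θ i j p)) := by
    intro i
    rw [dunkl_X_mul, dunkl_add, dunkl_X_mul]
    ring
  have hsum : (∑ i : Fin N, dunkl θ i (dunkl θ i (X j * p))) =
      X j * (∑ i : Fin N, dunkl θ i (dunkl θ i p)) +
      ∑ i : Fin N, (commT θ i j (dunkl θ i p) + dunkl θ i (commT θ i j p)) := by
    rw [Finset.mul_sum, ← Finset.sum_add_distrib]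
    exact Finset.sum_congr rfl fun i _ => step i
  rw [hsum, add_sub_cancel_left]
  rw [← Finset.add_sum_erase Finset.univ _ (Finset.mem_univ j)]
  have hj1 : commT θ j j (dunkl θ j p) = dunkl θ j p +
      θ • ∑ k ∈ Finset.univ.filter (fun k => k ≠ j), swapOp j k (dunkl θ j p) := by
    rw [commT, if_pos rfl]
  have hj2 : dunkl θ j (commT θ j j p) = dunkl θ j p +
      θ • ∑ k ∈ Finset.univ.filter (fun k => k ≠ j), swapOp j k (dunkl θ k p) := by
    rw [commT, if_pos rfl, dunkl_add, dunkl_smul]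
    congr 2
    rw [show dunkl θ j (∑ k ∈ Finset.univ.filter (fun k => k ≠ j), swapOp j k p) =
      ∑ k ∈ Finset.univ.filter (fun k => k ≠ j), dunkl θ j (swapOp j k p) from
        map_sum (dunklL θ j) _ _]
    refine Finset.sum_congr rfl fun k hk => ?_
    exact dunkl_swapOp θ (fun hc => (Finset.mem_filter.1 hk).2 hc.symm) p
  have hne : ∀ i ∈ Finset.univ.erase j,
      commT θ i j (dunkl θ i p) + dunkl θ i (commT θ i j p) =
      -(θ • swapOp j i (dunkl θ i p)) + -(θ • swapOp j i (dunkl θ j p)) := by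
    intro i hi
    have hij : i ≠ j := (Finset.mem_erase.1 hi).1
    rw [commT, if_neg hij, commT, if_neg hij]
    have hD : dunkl θ i (-(θ • swapOp i j p)) = -(θ • swapOp i j (dunkl θ j p)) := by
      rw [show (-(θ • swapOp i j p)) = (-θ) • swapOp i j p by rw [neg_smul],
        dunkl_smul, dunkl_swapOp θ hij, neg_smul]
    rw [hD, swapOp_comm i j, swapOp_comm i j]
  rw [Finset.sum_congr rfl hne]
  have herase : Finset.univ.erase j = Finset.univ.filter (fun k => k ≠ j) := by
    ext k; simp [Finset.mem_erase]
  rw [herase, Finset.sum_add_distrib]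
  rw [show (∑ i ∈ Finset.univ.filter (fun k => k ≠ j), -(θ • swapOp j i (dunkl θ i p))) =
      -(θ • ∑ i ∈ Finset.univ.filter (fun k => k ≠ j), swapOp j i (dunkl θ i p)) by
    rw [Finset.smul_sum, ← Finset.sum_neg_distrib]]
  rw [show (∑ i ∈ Finset.univ.filter (fun k => k ≠ j), -(θ • swapOp j i (dunkl θ j p))) =
      -(θ • ∑ i ∈ Finset.univ.filter (fun k => k ≠ j), swapOp j i (dunkl θ j p)) by
    rw [Finset.smul_sum, ← Finset.sum_neg_distrib]]
  rw [hj1, hj2]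
  ring
end
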